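/- Let σ > 0 and ω, c real with ω > 0 and 4ω > c². Set κ = √(4ω − c²), h(x) = cosh(σκx) − c/(2√ω), h_c(x) = −(σc/κ) x sinh(σκx) − 1/(2√ω), h_ω(x) = (2σ/κ) x sinh(σκx) + c/(4ω^{3/2}), and α_n = ∫_0^∞ h(x)^{−1/σ−n} dx. Then the following four identities hold: (1) ∫_0^∞ h^{−1/σ−2} h_c dx = −(1/(2√ω)) α₂ − (cσ/((σ+1)κ²)) α₁; (2) ∫_0^∞ h^{−1/σ−1} h_c dx = −(1/(2√ω)) α₁ − (cσ/κ²) α₀; (3) ∫_0^∞ h^{−1/σ−2} h_ω dx = (c/(4ω^{3/2})) α₂ + (2σ/((σ+1)κ²)) α₁; (4) ∫_0^∞ h^{−1/σ−1} h_ω dx = (c/(4ω^{3/2})) α₁ + (2σ/κ²) α₀. -/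

import Mathlib

open Real MeasureTheory Set Filter

/-- `κ = √(4ω − c²)`. -/
noncomputable def kap (ω c : ℝ) : ℝ := Real.sqrt (4 * ω - c ^ 2)

/-- `h(x) = cosh(σκx) − c/(2√ω)`. -/
noncomputable def hfun (σ ω c : ℝ) (x : ℝ) : ℝ :=
  Real.cosh (σ * kap ω c * x) - c / (2 * Real.sqrt ω)

/-- `h_c(x) = −(σc/κ) x sinh(σκx) − 1/(2√ω)`. -/
noncomputable def hfunc (σ ω c : ℝ) (x : ℝ) : ℝ :=
  -(σ * c / kap ω c) * x * Real.sinh (σ * kap ω c * x) - 1 / (2 * Real.sqrt ω)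

/-- `h_ω(x) = (2σ/κ) x sinh(σκx) + c/(4ω^{3/2})`. -/
noncomputable def hfunw (σ ω c : ℝ) (x : ℝ) : ℝ :=
  (2 * σ / kap ω c) * x * Real.sinh (σ * kap ω c * x) + c / (4 * ω ^ ((3 : ℝ) / 2))

noncomputable def eps (ω c : ℝ) : ℝ := (1 - |c / (2 * Real.sqrt ω)|) / 2

lemma kap_pos {ω c : ℝ} (h : c ^ 2 < 4 * ω) : 0 < kap ω c :=
  Real.sqrt_pos.2 (by linarith)

lemma kap_sq {ω c : ℝ} (h : c ^ 2 < 4 * ω) : kap ω c ^ 2 = 4 * ω - c ^ 2 :=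
  Real.sq_sqrt (by linarith)

lemma dlt {ω c : ℝ} (hω : 0 < ω) (h : c ^ 2 < 4 * ω) : |c / (2 * Real.sqrt ω)| < 1 := by
  have hs : 0 < Real.sqrt ω := Real.sqrt_pos.2 hω
  have h2 : 0 < 2 * Real.sqrt ω := by positivity
  rw [abs_div, abs_of_pos h2, div_lt_one h2, ← Real.sqrt_sq_eq_abs]
  refine (Real.sqrt_lt' h2).2 ?_
  have : Real.sqrt ω ^ 2 = ω := Real.sq_sqrt hω.le
  nlinarith

lemma eps_pos {ω c : ℝ} (hω : 0 < ω) (h : c ^ 2 < 4 * ω) : 0 < eps ω c := by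
  have := dlt hω h; unfold eps; linarith

lemma hfun_lower {σ ω c : ℝ} (hω : 0 < ω) (h : c ^ 2 < 4 * ω) (x : ℝ) :
    eps ω c * Real.exp (σ * kap ω c * x) ≤ hfun σ ω c x := by
  have hd := dlt hω h
  set t := σ * kap ω c * x
  have h1 : Real.exp t / 2 ≤ Real.cosh t := by
    rw [Real.cosh_eq]; have := Real.exp_pos (-t); linarith
  have h2 : 1 ≤ Real.cosh t := Real.one_le_cosh t
  have h3 : c / (2 * Real.sqrt ω) ≤ |c / (2 * Real.sqrt ω)| := le_abs_self _
  have h4 : |c / (2 * Real.sqrt ω)| * 1 ≤ |c / (2 * Real.sqrt ω)| * Real.cosh t :=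
    mul_le_mul_of_nonneg_left h2 (abs_nonneg _)
  unfold hfun eps
  nlinarith

lemma hfun_pos {σ ω c : ℝ} (hω : 0 < ω) (h : c ^ 2 < 4 * ω) (x : ℝ) :
    0 < hfun σ ω c x :=
  lt_of_lt_of_le (mul_pos (eps_pos hω h) (Real.exp_pos _)) (hfun_lower hω h x)

lemma hfun_cont (σ ω c : ℝ) : Continuous (hfun σ ω c) := by
  unfold hfun
  exact (Real.continuous_cosh.comp (continuous_const.mul continuous_id)).sub continuous_const

lemma exp_int (C b : ℝ) (hb : b < 0) :
    IntegrableOn (fun x => C * Real.exp (b * x)) (Set.Ioi (0:ℝ)) := by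
  have h0 : 0 < -b := by linarith
  have := (exp_neg_integrableOn_Ioi 0 h0).const_mul C
  simp at this; exact this

lemma int_rpow {σ ω c : ℝ} (hσ : 0 < σ) (hω : 0 < ω) (h : c ^ 2 < 4 * ω)
    (r : ℝ) (hr : r < 0) :
    IntegrableOn (fun x => hfun σ ω c x ^ r) (Set.Ioi (0:ℝ)) := by
  have hA : 0 < σ * kap ω c := mul_pos hσ (kap_pos h)
  have hε := eps_pos hω h
  refine Integrable.mono' (exp_int (eps ω c ^ r) (r * (σ * kap ω c))
      (by nlinarith)) ?_ ?_
  · exact ((hfun_cont σ ω c).rpow_const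
      (fun x => Or.inl (hfun_pos hω h x).ne')).continuousOn.aestronglyMeasurable
      measurableSet_Ioi
  · filter_upwards with x
    have hl := hfun_lower (σ := σ) hω h x
    rw [Real.norm_eq_abs, abs_of_nonneg (Real.rpow_nonneg (hfun_pos hω h x).le r)]
    calc hfun σ ω c x ^ r ≤ (eps ω c * Real.exp (σ * kap ω c * x)) ^ r :=
          Real.rpow_le_rpow_of_nonpos (by positivity) hl hr.le
      _ = eps ω c ^ r * Real.exp (r * (σ * kap ω c) * x) := by
          rw [Real.mul_rpow hε.le (Real.exp_pos _).le, ← Real.exp_mul]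
          ring_nf

lemma int_xsinh {σ ω c : ℝ} (hσ : 0 < σ) (hω : 0 < ω) (h : c ^ 2 < 4 * ω)
    (r : ℝ) (hr : r + 1 < 0) :
    IntegrableOn (fun x => x * Real.sinh (σ * kap ω c * x) * hfun σ ω c x ^ r)
      (Set.Ioi (0:ℝ)) := by
  have hA : 0 < σ * kap ω c := mul_pos hσ (kap_pos h)
  have hε := eps_pos hω h
  set A := σ * kap ω c with hAdef
  set t : ℝ := -((r + 1) * A) / 2 with ht
  have htpos : 0 < t := by rw [ht]; nlinarith
  refine Integrable.mono' (exp_int (eps ω c ^ r / t) ((r + 1) * A / 2)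
      (by nlinarith)) ?_ ?_
  · apply Continuous.aestronglyMeasurable ?_ |>.restrict
    exact (continuous_id.mul (Real.continuous_sinh.comp (continuous_const.mul
      continuous_id))).mul ((hfun_cont σ ω c).rpow_const
        (fun x => Or.inl (hfun_pos hω h x).ne'))
  · filter_upwards [ae_restrict_mem measurableSet_Ioi] with x hx
    have hx0 : (0:ℝ) < x := hx
    have hsinh : 0 ≤ Real.sinh (A * x) := by
      have h1 : Real.exp (-(A * x)) ≤ Real.exp (A * x) := Real.exp_le_exp.2 (by nlinarith)
      rw [Real.sinh_eq]; linarith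
    have hrp : 0 ≤ hfun σ ω c x ^ r := (Real.rpow_nonneg (hfun_pos hω h x).le r)
    rw [Real.norm_eq_abs, abs_of_nonneg (by positivity)]
    have e1 : x ≤ Real.exp (t * x) / t := by
      rw [le_div_iff₀ htpos]
      have := Real.add_one_le_exp (t * x)
      nlinarith
    have e2 : Real.sinh (A * x) ≤ Real.exp (A * x) := by
      rw [Real.sinh_eq]
      have := Real.exp_pos (-(A * x)); have := Real.exp_pos (A * x); linarith
    have e3 : hfun σ ω c x ^ r ≤ eps ω c ^ r * Real.exp (r * A * x) := by
      calc hfun σ ω c x ^ r ≤ (eps ω c * Real.exp (A * x)) ^ r :=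
            Real.rpow_le_rpow_of_nonpos (by positivity) (hfun_lower hω h x) (by linarith)
        _ = eps ω c ^ r * Real.exp (r * A * x) := by
            rw [Real.mul_rpow hε.le (Real.exp_pos _).le, ← Real.exp_mul]
            ring_nf
    calc x * Real.sinh (A * x) * hfun σ ω c x ^ r
        ≤ (Real.exp (t * x) / t) * Real.exp (A * x) * (eps ω c ^ r * Real.exp (r * A * x)) := by
          refine mul_le_mul (mul_le_mul e1 e2 hsinh (by positivity)) e3 hrp (by positivity)
      _ = eps ω c ^ r / t * Real.exp ((r + 1) * A / 2 * x) := by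
          have hexp : Real.exp (t * x) * Real.exp (A * x) * Real.exp (r * A * x)
              = Real.exp ((r + 1) * A / 2 * x) := by
            rw [← Real.exp_add, ← Real.exp_add]; congr 1; rw [ht]; ring
          rw [← hexp]; field_simp

lemma hfun_hasDerivAt (σ ω c : ℝ) (x : ℝ) :
    HasDerivAt (hfun σ ω c) (σ * kap ω c * Real.sinh (σ * kap ω c * x)) x := by
  have h1 : HasDerivAt (fun y : ℝ => σ * kap ω c * y) (σ * kap ω c) x := by
    simpa using (hasDerivAt_id x).const_mul (σ * kap ω c)
  have h2 := (h1.cosh).sub_const (c / (2 * Real.sqrt ω))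
  have heq : hfun σ ω c = fun y => Real.cosh (σ * kap ω c * y) - c / (2 * Real.sqrt ω) := rfl
  rw [heq]
  simpa [mul_comm] using h2

lemma key {σ ω c : ℝ} (hσ : 0 < σ) (hω : 0 < ω) (h : c ^ 2 < 4 * ω)
    (r : ℝ) (hr : r + 1 < 0) :
    ∫ x in Set.Ioi (0:ℝ), x * Real.sinh (σ * kap ω c * x) * hfun σ ω c x ^ r
      = (∫ x in Set.Ioi (0:ℝ), hfun σ ω c x ^ (r + 1)) / (-(r + 1) * (σ * kap ω c)) := by
  have hA : 0 < σ * kap ω c := mul_pos hσ (kap_pos h)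
  have hε := eps_pos hω h
  set A := σ * kap ω c with hAdef
  set F : ℝ → ℝ := fun x => x * hfun σ ω c x ^ (r + 1) with hF
  set F' : ℝ → ℝ := fun x =>
    hfun σ ω c x ^ (r + 1) + ((r + 1) * A) * (x * Real.sinh (A * x) * hfun σ ω c x ^ r)
    with hF'
  have hderiv : ∀ x ∈ Set.Ici (0:ℝ), HasDerivAt F (F' x) x := by
    intro x _
    have hd : HasDerivAt (fun y => hfun σ ω c y ^ (r + 1))
        ((A * Real.sinh (A * x)) * (r + 1) * hfun σ ω c x ^ (r + 1 - 1)) x :=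
      (hfun_hasDerivAt σ ω c x).rpow_const (Or.inl (hfun_pos hω h x).ne')
    have : HasDerivAt (fun y => id y * hfun σ ω c y ^ (r + 1))
        (1 * hfun σ ω c x ^ (r + 1) + id x * ((A * Real.sinh (A * x)) * (r + 1) * hfun σ ω c x ^ (r + 1 - 1))) x :=
      (hasDerivAt_id x).mul hd
    rw [show r + 1 - 1 = r by ring] at this
    convert this using 1
    simp only [F', id_eq, one_mul]; ring
    simp only [F', id_eq, one_mul]; ring
  have hint : IntegrableOn F' (Set.Ioi (0:ℝ)) :=
    (int_rpow hσ hω h (r + 1) hr).add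
      ((int_xsinh hσ hω h r hr).const_mul ((r + 1) * A))
  have htend : Tendsto F atTop (nhds 0) := by
    set t : ℝ := -((r + 1) * A) / 2 with ht
    have htpos : 0 < t := by rw [ht]; nlinarith
    have hg : Tendsto (fun x => eps ω c ^ (r + 1) / t * Real.exp ((r + 1) * A / 2 * x))
        atTop (nhds 0) := by
      have h1 : Tendsto (fun x : ℝ => (r + 1) * A / 2 * x) atTop atBot :=
        Tendsto.const_mul_atTop_of_neg (by nlinarith) tendsto_id
      have h2 := Real.tendsto_exp_atBot.comp h1
      have := h2.const_mul (eps ω c ^ (r + 1) / t)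
      simpa using this
    apply squeeze_zero' (Filter.eventually_atTop.2 ⟨1, fun x hx => ?_⟩)
      (Filter.eventually_atTop.2 ⟨1, fun x hx => ?_⟩) hg
    · have := hfun_pos (σ := σ) hω h x
      positivity
    · have hx0 : (0:ℝ) < x := by linarith
      have e1 : x ≤ Real.exp (t * x) / t := by
        rw [le_div_iff₀ htpos]
        have := Real.add_one_le_exp (t * x)
        nlinarith
      have e3 : hfun σ ω c x ^ (r + 1) ≤ eps ω c ^ (r + 1) * Real.exp ((r + 1) * A * x) := by
        calc hfun σ ω c x ^ (r + 1) ≤ (eps ω c * Real.exp (A * x)) ^ (r + 1) :=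
              Real.rpow_le_rpow_of_nonpos (by positivity) (hfun_lower hω h x) hr.le
          _ = eps ω c ^ (r + 1) * Real.exp ((r + 1) * A * x) := by
              rw [Real.mul_rpow hε.le (Real.exp_pos _).le, ← Real.exp_mul]
              ring_nf
      have hrp : 0 ≤ hfun σ ω c x ^ (r + 1) := Real.rpow_nonneg (hfun_pos hω h x).le _
      calc F x ≤ (Real.exp (t * x) / t) * (eps ω c ^ (r + 1) * Real.exp ((r + 1) * A * x)) :=
            mul_le_mul e1 e3 hrp (by positivity)
        _ = eps ω c ^ (r + 1) / t * Real.exp ((r + 1) * A / 2 * x) := by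
            have hexp : Real.exp (t * x) * Real.exp ((r + 1) * A * x)
                = Real.exp ((r + 1) * A / 2 * x) := by
              rw [← Real.exp_add]; congr 1; rw [ht]; ring
            rw [← hexp]; field_simp
  have hibp := integral_Ioi_of_hasDerivAt_of_tendsto' hderiv hint htend
  have hF0 : F 0 = 0 := by simp [hF]
  rw [hF0, sub_zero] at hibp
  have hsplit : ∫ x in Set.Ioi (0:ℝ), F' x
      = (∫ x in Set.Ioi (0:ℝ), hfun σ ω c x ^ (r + 1))
        + ((r + 1) * A) * ∫ x in Set.Ioi (0:ℝ), x * Real.sinh (A * x) * hfun σ ω c x ^ r := by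
    rw [hF']
    rw [integral_add (int_rpow hσ hω h (r + 1) hr)
      ((int_xsinh hσ hω h r hr).const_mul ((r + 1) * A)), integral_const_mul]
  rw [hibp] at hsplit
  rw [eq_div_iff (mul_pos (by linarith : (0:ℝ) < -(r + 1)) hA).ne']
  linear_combination hsplit

lemma split {σ ω c : ℝ} (hσ : 0 < σ) (hω : 0 < ω) (h : c ^ 2 < 4 * ω)
    (p b e : ℝ) (hp : p + 1 < 0) :
    (∫ x in Set.Ioi (0:ℝ), hfun σ ω c x ^ p * (b * x * Real.sinh (σ * kap ω c * x) + e))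
      = b * ((∫ x in Set.Ioi (0:ℝ), hfun σ ω c x ^ (p + 1)) / (-(p + 1) * (σ * kap ω c)))
        + e * ∫ x in Set.Ioi (0:ℝ), hfun σ ω c x ^ p := by
  have h1 : (fun x => hfun σ ω c x ^ p * (b * x * Real.sinh (σ * kap ω c * x) + e))
      = fun x => b * (x * Real.sinh (σ * kap ω c * x) * hfun σ ω c x ^ p)
        + e * hfun σ ω c x ^ p := by
    funext x; ring
  rw [h1, integral_add ((int_xsinh hσ hω h p hp).const_mul b)
    ((int_rpow hσ hω h p (by linarith)).const_mul e), integral_const_mul, integral_const_mul,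
    key hσ hω h p hp]


/-- `α_n = ∫_0^∞ h^{−1/σ−n} dx`. -/
noncomputable def alphaInt (σ ω c : ℝ) (n : ℕ) : ℝ :=
  ∫ x in Set.Ioi (0 : ℝ), hfun σ ω c x ^ (-(1 / σ) - (n : ℝ))

theorem h_derivative_integral_identities (σ ω c : ℝ) (hσ : 0 < σ) (hω : 0 < ω)
    (h : c ^ 2 < 4 * ω) :
    (∫ x in Set.Ioi (0 : ℝ), hfun σ ω c x ^ (-(1 / σ) - 2) * hfunc σ ω c x)
        = -(1 / (2 * Real.sqrt ω)) * alphaInt σ ω c 2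
          - (c * σ / ((σ + 1) * kap ω c ^ 2)) * alphaInt σ ω c 1 ∧
    (∫ x in Set.Ioi (0 : ℝ), hfun σ ω c x ^ (-(1 / σ) - 1) * hfunc σ ω c x)
        = -(1 / (2 * Real.sqrt ω)) * alphaInt σ ω c 1
          - (c * σ / kap ω c ^ 2) * alphaInt σ ω c 0 ∧
    (∫ x in Set.Ioi (0 : ℝ), hfun σ ω c x ^ (-(1 / σ) - 2) * hfunw σ ω c x)
        = (c / (4 * ω ^ ((3 : ℝ) / 2))) * alphaInt σ ω c 2
          + (2 * σ / ((σ + 1) * kap ω c ^ 2)) * alphaInt σ ω c 1 ∧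
    (∫ x in Set.Ioi (0 : ℝ), hfun σ ω c x ^ (-(1 / σ) - 1) * hfunw σ ω c x)
        = (c / (4 * ω ^ ((3 : ℝ) / 2))) * alphaInt σ ω c 1
          + (2 * σ / kap ω c ^ 2) * alphaInt σ ω c 0 := by

  have hκ := kap_pos h
  have hκ2 := kap_sq h
  have hσ' : σ ≠ 0 := hσ.ne'
  have hσ1 : σ + 1 ≠ 0 := by positivity
  have hs : (0:ℝ) < Real.sqrt ω := Real.sqrt_pos.2 hω
  have hp2 : -(1 / σ) - 2 + 1 < 0 := by
    have : 0 < 1 / σ := by positivity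
    linarith
  have hp1 : -(1 / σ) - 1 + 1 < 0 := by
    have : 0 < 1 / σ := by positivity
    linarith
  have A0 : (∫ x in Set.Ioi (0:ℝ), hfun σ ω c x ^ (-(1 / σ) - 1 + 1)) = alphaInt σ ω c 0 := by
    rw [show -(1 / σ) - 1 + 1 = -(1 / σ) - ((0:ℕ):ℝ) by push_cast; ring]
    rfl
  have A1 : (∫ x in Set.Ioi (0:ℝ), hfun σ ω c x ^ (-(1 / σ) - 2 + 1)) = alphaInt σ ω c 1 := by
    rw [show -(1 / σ) - 2 + 1 = -(1 / σ) - ((1:ℕ):ℝ) by push_cast; ring]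
    rfl
  have A1' : (∫ x in Set.Ioi (0:ℝ), hfun σ ω c x ^ (-(1 / σ) - 1)) = alphaInt σ ω c 1 := by
    rw [show -(1 / σ) - 1 = -(1 / σ) - ((1:ℕ):ℝ) by push_cast; ring]
    rfl
  have A2 : (∫ x in Set.Ioi (0:ℝ), hfun σ ω c x ^ (-(1 / σ) - 2)) = alphaInt σ ω c 2 := by
    rw [show -(1 / σ) - 2 = -(1 / σ) - ((2:ℕ):ℝ) by push_cast; ring]
    rfl
  have hfc : ∀ p : ℝ, (fun x => hfun σ ω c x ^ p * hfunc σ ω c x)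
      = fun x => hfun σ ω c x ^ p
        * (-(σ * c / kap ω c) * x * Real.sinh (σ * kap ω c * x) + -(1 / (2 * Real.sqrt ω))) := by
    intro p; funext x; simp only [hfunc]; try ring
  have hfw : ∀ p : ℝ, (fun x => hfun σ ω c x ^ p * hfunw σ ω c x)
      = fun x => hfun σ ω c x ^ p
        * (2 * σ / kap ω c * x * Real.sinh (σ * kap ω c * x) + c / (4 * ω ^ ((3:ℝ) / 2))) := by
    intro p; funext x; simp only [hfunw]; try ring
  refine ⟨?_, ?_, ?_, ?_⟩
  · rw [show (∫ x in Set.Ioi (0:ℝ), hfun σ ω c x ^ (-(1 / σ) - 2) * hfunc σ ω c x)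
        = ∫ x in Set.Ioi (0:ℝ), hfun σ ω c x ^ (-(1 / σ) - 2)
          * (-(σ * c / kap ω c) * x * Real.sinh (σ * kap ω c * x) + -(1 / (2 * Real.sqrt ω)))
      from by rw [hfc]]
    rw [split hσ hω h _ _ _ hp2, A1, A2]
    have hd : -(-(1 / σ) - 2 + 1) = 1 / σ + 1 := by ring
    rw [hd]
    field_simp
    ring
  · rw [show (∫ x in Set.Ioi (0:ℝ), hfun σ ω c x ^ (-(1 / σ) - 1) * hfunc σ ω c x)
        = ∫ x in Set.Ioi (0:ℝ), hfun σ ω c x ^ (-(1 / σ) - 1)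
          * (-(σ * c / kap ω c) * x * Real.sinh (σ * kap ω c * x) + -(1 / (2 * Real.sqrt ω)))
      from by rw [hfc]]
    rw [split hσ hω h _ _ _ hp1, A0, A1']
    have hd : -(-(1 / σ) - 1 + 1) = 1 / σ := by ring
    rw [hd]
    field_simp
    ring
  · rw [show (∫ x in Set.Ioi (0:ℝ), hfun σ ω c x ^ (-(1 / σ) - 2) * hfunw σ ω c x)
        = ∫ x in Set.Ioi (0:ℝ), hfun σ ω c x ^ (-(1 / σ) - 2)
          * (2 * σ / kap ω c * x * Real.sinh (σ * kap ω c * x) + c / (4 * ω ^ ((3:ℝ) / 2)))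
      from by rw [hfw]]
    rw [split hσ hω h _ _ _ hp2, A1, A2]
    have hd : -(-(1 / σ) - 2 + 1) = 1 / σ + 1 := by ring
    rw [hd]
    field_simp
    ring
  · rw [show (∫ x in Set.Ioi (0:ℝ), hfun σ ω c x ^ (-(1 / σ) - 1) * hfunw σ ω c x)
        = ∫ x in Set.Ioi (0:ℝ), hfun σ ω c x ^ (-(1 / σ) - 1)
          * (2 * σ / kap ω c * x * Real.sinh (σ * kap ω c * x) + c / (4 * ω ^ ((3:ℝ) / 2)))
      from by rw [hfw]]
    rw [split hσ hω h _ _ _ hp1, A0, A1']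
    have hd : -(-(1 / σ) - 1 + 1) = 1 / σ := by ring
    rw [hd]
    field_simp
    ring
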